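/- Let a ∈ C¹([-1,1]) be positive on (-1,1), vanishing at ±1, with ∫₀^· ds/a ∈ L¹(-1,1). Define A₀ u = (a u_x)_x on D(A₀) = H²_a(-1,1) = {u ∈ H¹_a : a u_x ∈ H¹(-1,1), (a u_x)(±1) = 0}. Then A₀ is self-adjoint and dissipative on L²(-1,1): ⟨A₀ u, u⟩ = −∫_{-1}^1 a(x) u_x(x)² dx ≤ 0 for all u ∈ D(A₀), and ⟨A₀ u, w⟩ = ⟨u, A₀ w⟩ for all u, w ∈ D(A₀). -/

import Mathlib

open MeasureTheory Set Real Topology Filter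


lemma aux_ni_right {y : ℝ} (hy : y < 1) :
    ¬ IntegrableOn (fun x : ℝ => (1 - x)⁻¹) (Ioo y 1) volume := by
  intro h
  have h1 : IntervalIntegrable (fun x : ℝ => (1 - x)⁻¹) volume y 1 :=
    (intervalIntegrable_iff_integrableOn_Ioo_of_le hy.le).2 h
  have h2 := (h1.comp_sub_left 1).symm
  have e : (fun x : ℝ => (1 - (1 - x))⁻¹) = (fun x : ℝ => x⁻¹) := by
    funext x; norm_num
  rw [e] at h2
  have h4 : IntegrableOn (fun x : ℝ => x⁻¹) (Ioo 0 (1 - y)) volume := by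
    have := (intervalIntegrable_iff_integrableOn_Ioo_of_le
      (by linarith : (1:ℝ) - 1 ≤ 1 - y)).1 h2
    simpa using this
  have h5 : IntegrableOn (fun x : ℝ => x ^ (-1 : ℝ)) (Ioo 0 (1 - y)) volume := by
    refine h4.congr_fun (fun x hx => ?_) measurableSet_Ioo
    simp [Real.rpow_neg_one]
  have := (intervalIntegral.integrableOn_Ioo_rpow_iff (by linarith : (0:ℝ) < 1 - y)).1 h5
  linarith

lemma aux_ni_left {y : ℝ} (hy : -1 < y) :
    ¬ IntegrableOn (fun x : ℝ => (1 + x)⁻¹) (Ioo (-1) y) volume := by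
  intro h
  have h1 : IntervalIntegrable (fun x : ℝ => (1 + x)⁻¹) volume (-1) y :=
    (intervalIntegrable_iff_integrableOn_Ioo_of_le hy.le).2 h
  have h2 := h1.comp_add_left (-1)
  have e : (fun x : ℝ => (1 + (-1 + x))⁻¹) = (fun x : ℝ => x⁻¹) := by
    funext x; norm_num
  rw [e] at h2
  have h4 : IntegrableOn (fun x : ℝ => x⁻¹) (Ioo 0 (y + 1)) volume := by
    have := (intervalIntegrable_iff_integrableOn_Ioo_of_le
      (by linarith : (-1:ℝ) - -1 ≤ y - -1)).1 h2
    have e2 : ((-1:ℝ) - -1) = 0 := by norm_num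
    have e3 : (y - -1) = y + 1 := by ring
    rwa [e2, e3] at this
  have h5 : IntegrableOn (fun x : ℝ => x ^ (-1 : ℝ)) (Ioo 0 (y + 1)) volume := by
    refine h4.congr_fun (fun x hx => ?_) measurableSet_Ioo
    simp [Real.rpow_neg_one]
  have := (intervalIntegral.integrableOn_Ioo_rpow_iff (by linarith : (0:ℝ) < y + 1)).1 h5
  linarith


lemma my_cs {s : Set ℝ} (hs : MeasurableSet s) (hfin : volume s ≠ ⊤) {g : ℝ → ℝ}
    (hg : IntegrableOn g s volume) (hg2 : IntegrableOn (fun x => g x ^ 2) s volume) :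
    ∫ x in s, |g x| ≤ Real.sqrt ((volume s).toReal * ∫ x in s, g x ^ 2) := by
  set m := (volume s).toReal with hm_def
  set K := ∫ x in s, g x ^ 2 with hK_def
  have hK : 0 ≤ K := setIntegral_nonneg hs fun x _ => sq_nonneg _
  have hm : 0 ≤ m := ENNReal.toReal_nonneg
  have key : ∀ ε : ℝ, 0 < ε → ∫ x in s, |g x| ≤ ε / 2 * m + K / (2 * ε) := by
    intro ε hε
    have hconst : IntegrableOn (fun _ : ℝ => ε / 2) s volume :=
      integrableOn_const hfin
    have hdiv : Integrable (fun x => g x ^ 2 / (2 * ε)) (volume.restrict s) :=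
      hg2.div_const _
    have hmono := integral_mono hg.abs (hconst.add hdiv) (fun x => by
      have h2 : |g x| ^ 2 = g x ^ 2 := sq_abs _
      have h3 : |g x| ≤ (ε ^ 2 + g x ^ 2) / (2 * ε) := by
        rw [le_div_iff₀ (by positivity)]
        nlinarith [sq_nonneg (|g x| - ε), abs_nonneg (g x)]
      have h4 : (ε ^ 2 + g x ^ 2) / (2 * ε) = ε / 2 + g x ^ 2 / (2 * ε) := by
        field_simp
      simp only [Pi.add_apply]
      linarith [h4 ▸ h3])
    calc ∫ x in s, |g x| ≤ ∫ x in s, (ε / 2 + g x ^ 2 / (2 * ε)) := hmono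
      _ = ε / 2 * m + K / (2 * ε) := by
          rw [integral_add hconst hdiv, setIntegral_const, integral_div]
          simp [smul_eq_mul, mul_comm]
          rfl
  rcases eq_or_lt_of_le hm with hm0 | hm0
  · have h0 : volume s = 0 := by
      rcases (ENNReal.toReal_eq_zero_iff _).1 hm0.symm with h | h
      · exact h
      · exact absurd h hfin
    rw [Measure.restrict_eq_zero.2 h0]
    simp [Real.sqrt_nonneg]
  · rcases eq_or_lt_of_le hK with hK0 | hK0
    · have hle : ∫ x in s, |g x| ≤ 0 := by
        refine le_of_forall_pos_le_add fun δ hδ => ?_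
        have h := key (2 * δ / m) (by positivity)
        have e1 : 2 * δ / m / 2 * m = δ := by field_simp
        rw [e1, ← hK0] at h
        simpa using h
      have : Real.sqrt (m * K) = 0 := by rw [← hK0, mul_zero, Real.sqrt_zero]
      rw [this]; exact hle
    · set r := Real.sqrt (m * K) with hr_def
      have hrpos : 0 < r := Real.sqrt_pos.2 (mul_pos hm0 hK0)
      have hrsq : r * r = m * K := Real.mul_self_sqrt (mul_nonneg hm0.le hK0.le)
      have h := key (r / m) (div_pos hrpos hm0)
      have e1 : r / m / 2 * m = r / 2 := by field_simp
      have e2 : K / (2 * (r / m)) = r / 2 := by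
        rw [div_eq_div_iff (by positivity) (by norm_num : (2:ℝ) ≠ 0)]
        field_simp
        nlinarith [hrsq]
      rw [e1, e2] at h
      linarith

set_option maxHeartbeats 1600000 in
lemma ibp_key
    (a : ℝ → ℝ) (ha : ContDiffOn ℝ 1 a (Icc (-1) 1))
    (hapos : ∀ x ∈ Ioo (-1:ℝ) 1, 0 < a x)
    (ha1 : a (-1) = 0) (ha2 : a 1 = 0)
    (u' Au w w' : ℝ → ℝ)
    (huL2' : MemLp (fun x => Real.sqrt (a x) * u' x) 2 (volume.restrict (Ioo (-1) 1)))
    (hAu : ∀ x ∈ Ioo (-1:ℝ) 1, HasDerivAt (fun y => a y * u' y) (Au x) x)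
    (hAuL2 : MemLp Au 2 (volume.restrict (Ioo (-1) 1)))
    (hw : ∀ x ∈ Ioo (-1:ℝ) 1, HasDerivAt w (w' x) x)
    (hwL2 : MemLp w 2 (volume.restrict (Ioo (-1) 1)))
    (hwL2' : MemLp (fun x => Real.sqrt (a x) * w' x) 2 (volume.restrict (Ioo (-1) 1)))
    (hu'c : ContinuousOn u' (Ioo (-1) 1))
    (hw'c : ContinuousOn w' (Ioo (-1) 1)) :
    ∫ x in Ioo (-1:ℝ) 1, Au x * w x = -∫ x in Ioo (-1:ℝ) 1, a x * u' x * w' x := by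
  set I : Set ℝ := Ioo (-1:ℝ) 1 with hI_def
  haveI hfinI : IsFiniteMeasure (volume.restrict I) := by
    constructor
    rw [Measure.restrict_apply_univ]
    exact measure_Ioo_lt_top
  have hIfin : volume I ≠ ⊤ := measure_Ioo_lt_top.ne
  -- Lipschitz bound on a
  obtain ⟨M, hM0, hMb1, hMb2⟩ :
      ∃ M : ℝ, 0 < M ∧ (∀ x ∈ Icc (-1:ℝ) 1, a x ≤ M * (1 - x)) ∧
        (∀ x ∈ Icc (-1:ℝ) 1, a x ≤ M * (1 + x)) := by
    have hd : DifferentiableOn ℝ a (Icc (-1) 1) := ha.differentiableOn one_ne_zero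
    have hcd : ContinuousOn (derivWithin a (Icc (-1) 1)) (Icc (-1) 1) :=
      ha.continuousOn_derivWithin (uniqueDiffOn_Icc (by norm_num)) le_rfl
    obtain ⟨C, hC⟩ := isCompact_Icc.exists_bound_of_continuousOn hcd
    refine ⟨max C 1, lt_of_lt_of_le one_pos (le_max_right _ _), ?_, ?_⟩
    · intro x hx
      have h := Convex.norm_image_sub_le_of_norm_derivWithin_le hd
        (fun z hz => (hC z hz).trans (le_max_left C 1)) (convex_Icc _ _)
        (by norm_num : (1:ℝ) ∈ Icc (-1:ℝ) 1) hx
      rw [ha2, sub_zero, Real.norm_eq_abs, Real.norm_eq_abs] at h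
      have h2 : a x ≤ |a x| := le_abs_self _
      have h3 : |x - 1| = 1 - x := by
        rw [abs_sub_comm, abs_of_nonneg (by linarith [hx.2])]
      rw [h3] at h
      linarith
    · intro x hx
      have h := Convex.norm_image_sub_le_of_norm_derivWithin_le hd
        (fun z hz => (hC z hz).trans (le_max_left C 1)) (convex_Icc _ _)
        (by norm_num : (-1:ℝ) ∈ Icc (-1:ℝ) 1) hx
      rw [ha1, sub_zero, Real.norm_eq_abs, Real.norm_eq_abs] at h
      have h2 : a x ≤ |a x| := le_abs_self _
      have h3 : |x - -1| = 1 + x := by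
        rw [abs_of_nonneg (by linarith [hx.1])]; ring
      rw [h3] at h
      linarith

  -- basic integrability
  have hAuI : IntegrableOn Au I volume := hAuL2.integrable one_le_two
  have hgInt : Integrable (I.indicator Au) volume :=
    hAuI.integrable_indicator measurableSet_Ioo
  have hAu2 : IntegrableOn (fun x => Au x ^ 2) I volume := hAuL2.integrable_sq
  have hw2 : IntegrableOn (fun x => w x ^ 2) I volume := hwL2.integrable_sq
  have hau2 : IntegrableOn (fun x => a x * u' x ^ 2) I volume := by
    refine huL2'.integrable_sq.congr ?_
    rw [Filter.EventuallyEq, ae_restrict_iff' measurableSet_Ioo]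
    refine ae_of_all _ fun x hx => ?_
    rw [mul_pow, Real.sq_sqrt (hapos x hx).le]
  have haw2 : IntegrableOn (fun x => a x * w' x ^ 2) I volume := by
    refine hwL2'.integrable_sq.congr ?_
    rw [Filter.EventuallyEq, ae_restrict_iff' measurableSet_Ioo]
    refine ae_of_all _ fun x hx => ?_
    rw [mul_pow, Real.sq_sqrt (hapos x hx).le]
  have hca : ContinuousOn a I := ha.continuousOn.mono Ioo_subset_Icc_self
  have hauw : IntegrableOn (fun t => a t * u' t * w' t) I volume := by
    refine Integrable.mono' (hau2.add haw2)
      (((hca.mul hu'c).mul hw'c).aestronglyMeasurable measurableSet_Ioo) ?_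
    rw [ae_restrict_iff' measurableSet_Ioo]
    refine ae_of_all _ fun x hx => ?_
    have hax := (hapos x hx).le
    simp only [Pi.add_apply]
    rw [Real.norm_eq_abs, abs_le]
    constructor <;>
      nlinarith [mul_nonneg hax (sq_nonneg (u' x - w' x)),
        mul_nonneg hax (sq_nonneg (u' x + w' x)),
        mul_nonneg hax (sq_nonneg (u' x)), mul_nonneg hax (sq_nonneg (w' x))]
  have hAuw : IntegrableOn (fun t => Au t * w t) I volume := by
    refine Integrable.mono' (hAu2.add hw2)
      (hAuL2.aestronglyMeasurable.mul hwL2.aestronglyMeasurable) ?_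
    refine ae_of_all _ fun x => ?_
    simp only [Pi.add_apply]
    rw [Real.norm_eq_abs, abs_le]
    constructor <;> nlinarith [sq_nonneg (Au x - w x), sq_nonneg (Au x + w x)]
  have hq_sum : IntegrableOn (fun t => Au t * w t + a t * u' t * w' t)
      I volume := hAuw.add hauw
  set q : ℝ → ℝ := I.indicator (fun t => Au t * w t + a t * u' t * w' t) with hq_def
  have hqInt : Integrable q volume := hq_sum.integrable_indicator measurableSet_Ioo
  set P : ℝ → ℝ := fun y => ∫ t in (0:ℝ)..y, I.indicator Au t with hP_def
  set Q : ℝ → ℝ := fun y => ∫ t in (0:ℝ)..y, q t with hQ_def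
  have hPc : Continuous P := hgInt.continuous_primitive 0
  have hQc : Continuous Q := hqInt.continuous_primitive 0
  have hsubI : ∀ y ∈ I, uIcc (0:ℝ) y ⊆ I := by
    intro y hy z hz
    rcases Set.mem_uIcc.1 hz with ⟨h1, h2⟩ | ⟨h1, h2⟩ <;>
      exact ⟨by linarith [hy.1], by linarith [hy.2]⟩
  -- FTC for v = a * u'
  have hve : ∀ y ∈ I, a y * u' y = a 0 * u' 0 + P y := by
    intro y hy
    have hsub := hsubI y hy
    have hint : IntervalIntegrable Au volume 0 y := by
      rw [intervalIntegrable_iff]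
      exact hAuI.mono_set (Set.uIoc_subset_uIcc.trans hsub)
    have hFTC := intervalIntegral.integral_eq_sub_of_hasDerivAt
      (fun t ht => hAu t (hsub ht)) hint
    have hcongr : ∫ t in (0:ℝ)..y, Au t = P y := by
      refine intervalIntegral.integral_congr fun t ht => ?_
      exact (Set.indicator_of_mem (hsub ht) Au).symm
    rw [hcongr] at hFTC
    linarith [hFTC]
  -- FTC for v * w
  have hQe : ∀ y ∈ I, a y * u' y * w y = a 0 * u' 0 * w 0 + Q y := by
    intro y hy
    have hsub := hsubI y hy
    have hint : IntervalIntegrable (fun t => Au t * w t + a t * u' t * w' t)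
        volume 0 y := by
      rw [intervalIntegrable_iff]
      exact hq_sum.mono_set (Set.uIoc_subset_uIcc.trans hsub)
    have hFTC := intervalIntegral.integral_eq_sub_of_hasDerivAt
      (f := fun t => a t * u' t * w t)
      (f' := fun t => Au t * w t + a t * u' t * w' t)
      (fun t ht => (hAu t (hsub ht)).mul (hw t (hsub ht))) hint
    have hcongr : ∫ t in (0:ℝ)..y, (Au t * w t + a t * u' t * w' t) = Q y := by
      refine intervalIntegral.integral_congr fun t ht => ?_
      exact (Set.indicator_of_mem (hsub ht)
        (fun t => Au t * w t + a t * u' t * w' t)).symm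
    rw [hcongr] at hFTC
    change Q y = a y * u' y * w y - a 0 * u' 0 * w 0 at hFTC
    linarith [hFTC]
  have h0mem : (0:ℝ) ∈ I := by constructor <;> norm_num
  have hI1 : I ∈ 𝓝[<] (1:ℝ) := Ioo_mem_nhdsLT_of_mem (by constructor <;> norm_num)
  have hIm1 : I ∈ 𝓝[>] (-1:ℝ) := Ioo_mem_nhdsGT_of_mem (by constructor <;> norm_num)
  have htv1 : Filter.Tendsto (fun x => a x * u' x) (𝓝[<] (1:ℝ))
      (𝓝 (a 0 * u' 0 + P 1)) := by
    refine Filter.Tendsto.congr' ?_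
      (((continuous_const.add hPc).tendsto 1).mono_left nhdsWithin_le_nhds)
    filter_upwards [hI1] with x hx using (hve x hx).symm
  have htvm1 : Filter.Tendsto (fun x => a x * u' x) (𝓝[>] (-1:ℝ))
      (𝓝 (a 0 * u' 0 + P (-1))) := by
    refine Filter.Tendsto.congr' ?_
      (((continuous_const.add hPc).tendsto (-1)).mono_left nhdsWithin_le_nhds)
    filter_upwards [hIm1] with x hx using (hve x hx).symm
  -- Step A : limit of a * u' at 1 is 0
  have hVt1 : a 0 * u' 0 + P 1 = 0 := by
    by_contra hne
    set L := a 0 * u' 0 + P 1 with hL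
    have hev : ∀ᶠ x in 𝓝[<] (1:ℝ), |L| / 2 < |a x * u' x| :=
      htv1.abs.eventually (eventually_gt_nhds (half_lt_self (abs_pos.2 hne)))
    have hmem : ∀ᶠ x in 𝓝[<] (1:ℝ), x ∈ I := hI1
    obtain ⟨l, hl, hsub⟩ := mem_nhdsLT_iff_exists_Ioo_subset.1 (hev.and hmem)
    set y₀ := max l 0 with hy₀_def
    have hy₀1 : y₀ < 1 := max_lt hl (by norm_num)
    have hss : Ioo y₀ 1 ⊆ Ioo l 1 := Ioo_subset_Ioo_left (le_max_left _ _)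
    have hsubI' : Ioo y₀ 1 ⊆ I := by
      intro z hz
      have h1 := le_max_right l 0
      exact ⟨by linarith [hz.1], hz.2⟩
    have hIntOn : IntegrableOn (fun x => a x * u' x ^ 2) (Ioo y₀ 1) volume :=
      hau2.mono_set hsubI'
    have hb : IntegrableOn (fun x : ℝ => (1 - x)⁻¹) (Ioo y₀ 1) volume := by
      refine Integrable.mono' (hIntOn.const_mul (4 * M / L ^ 2))
        ((measurable_const.sub measurable_id).inv.aestronglyMeasurable) ?_
      rw [ae_restrict_iff' measurableSet_Ioo]
      refine ae_of_all _ fun x hx => ?_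
      have hxI : x ∈ I := hsubI' hx
      obtain ⟨hgt, -⟩ := hsub (hss hx)
      have hax := hapos x hxI
      have haxle : a x ≤ M * (1 - x) := hMb1 x (Ioo_subset_Icc_self hxI)
      have h1x : (0:ℝ) < 1 - x := by linarith [hx.2]
      rw [Real.norm_eq_abs, abs_of_nonneg (by positivity)]
      have hv2 : L ^ 2 / 4 ≤ (a x * u' x) ^ 2 := by
        have habs2 : |L| / 2 * (|L| / 2) ≤ |a x * u' x| * |a x * u' x| :=
          mul_self_le_mul_self (by positivity) hgt.le
        have e1 : |L| / 2 * (|L| / 2) = L ^ 2 / 4 := by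
          rw [div_mul_div_comm, ← sq, sq_abs]; norm_num
        have e2 : |a x * u' x| * |a x * u' x| = (a x * u' x) ^ 2 := by
          rw [← sq, sq_abs]
        linarith
      have he : a x * u' x ^ 2 = (a x * u' x) ^ 2 / a x := by
        rw [eq_div_iff (ne_of_gt hax)]; ring
      have h2 : L ^ 2 / 4 / (M * (1 - x)) ≤ a x * u' x ^ 2 := by
        rw [he]
        calc L ^ 2 / 4 / (M * (1 - x)) ≤ L ^ 2 / 4 / a x := by
              apply div_le_div_of_nonneg_left (by positivity) hax haxle
          _ ≤ (a x * u' x) ^ 2 / a x := by gcongr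
      have hLpos : (0:ℝ) < L ^ 2 := by positivity
      have he2 : (1 - x)⁻¹ = 4 * M / L ^ 2 * (L ^ 2 / 4 / (M * (1 - x))) := by
        field_simp
      rw [he2]
      exact mul_le_mul_of_nonneg_left h2 (by positivity)
    exact aux_ni_right hy₀1 hb

  -- Step A' : limit of a * u' at -1 is 0
  have hVtm1 : a 0 * u' 0 + P (-1) = 0 := by
    by_contra hne
    set L := a 0 * u' 0 + P (-1) with hL
    have hev : ∀ᶠ x in 𝓝[>] (-1:ℝ), |L| / 2 < |a x * u' x| :=
      htvm1.abs.eventually (eventually_gt_nhds (half_lt_self (abs_pos.2 hne)))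
    have hmem : ∀ᶠ x in 𝓝[>] (-1:ℝ), x ∈ I := hIm1
    obtain ⟨l, hl, hsub⟩ := mem_nhdsGT_iff_exists_Ioo_subset.1 (hev.and hmem)
    set y₀ := min l 0 with hy₀_def
    have hy₀1 : -1 < y₀ := lt_min hl (by norm_num)
    have hss : Ioo (-1:ℝ) y₀ ⊆ Ioo (-1:ℝ) l := Ioo_subset_Ioo_right (min_le_left _ _)
    have hsubI' : Ioo (-1:ℝ) y₀ ⊆ I := by
      intro z hz
      have h1 := min_le_right l 0
      exact ⟨hz.1, by linarith [hz.2]⟩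
    have hIntOn : IntegrableOn (fun x => a x * u' x ^ 2) (Ioo (-1:ℝ) y₀) volume :=
      hau2.mono_set hsubI'
    have hb : IntegrableOn (fun x : ℝ => (1 + x)⁻¹) (Ioo (-1:ℝ) y₀) volume := by
      refine Integrable.mono' (hIntOn.const_mul (4 * M / L ^ 2))
        ((measurable_const.add measurable_id).inv.aestronglyMeasurable) ?_
      rw [ae_restrict_iff' measurableSet_Ioo]
      refine ae_of_all _ fun x hx => ?_
      have hxI : x ∈ I := hsubI' hx
      obtain ⟨hgt, -⟩ := hsub (hss hx)
      have hax := hapos x hxI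
      have haxle : a x ≤ M * (1 + x) := hMb2 x (Ioo_subset_Icc_self hxI)
      have h1x : (0:ℝ) < 1 + x := by linarith [hx.1]
      rw [Real.norm_eq_abs, abs_of_nonneg (by positivity)]
      have hv2 : L ^ 2 / 4 ≤ (a x * u' x) ^ 2 := by
        have habs2 : |L| / 2 * (|L| / 2) ≤ |a x * u' x| * |a x * u' x| :=
          mul_self_le_mul_self (by positivity) hgt.le
        have e1 : |L| / 2 * (|L| / 2) = L ^ 2 / 4 := by
          rw [div_mul_div_comm, ← sq, sq_abs]; norm_num
        have e2 : |a x * u' x| * |a x * u' x| = (a x * u' x) ^ 2 := by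
          rw [← sq, sq_abs]
        linarith
      have he : a x * u' x ^ 2 = (a x * u' x) ^ 2 / a x := by
        rw [eq_div_iff (ne_of_gt hax)]; ring
      have h2 : L ^ 2 / 4 / (M * (1 + x)) ≤ a x * u' x ^ 2 := by
        rw [he]
        calc L ^ 2 / 4 / (M * (1 + x)) ≤ L ^ 2 / 4 / a x := by
              apply div_le_div_of_nonneg_left (by positivity) hax haxle
          _ ≤ (a x * u' x) ^ 2 / a x := by gcongr
      have hLpos : (0:ℝ) < L ^ 2 := by positivity
      have he2 : (1 + x)⁻¹ = 4 * M / L ^ 2 * (L ^ 2 / 4 / (M * (1 + x))) := by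
        field_simp
      rw [he2]
      exact mul_le_mul_of_nonneg_left h2 (by positivity)
    exact aux_ni_left hy₀1 hb
  -- Step B : quantitative sqrt bounds on a * u'
  set K2 : ℝ := ∫ t, (I.indicator Au t) ^ 2 with hK2_def
  have hg2Int : Integrable (fun t => (I.indicator Au t) ^ 2) volume := by
    have e : (fun t => (I.indicator Au t) ^ 2) = I.indicator (fun t => Au t ^ 2) := by
      funext t
      by_cases ht : t ∈ I
      · simp [Set.indicator_of_mem ht]
      · simp [Set.indicator_of_notMem ht]
    rw [e]
    exact hAu2.integrable_indicator measurableSet_Ioo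
  have hK2nn : 0 ≤ K2 := integral_nonneg fun t => sq_nonneg _
  have hbd1 : ∀ x ∈ I, |a x * u' x| ≤ Real.sqrt ((1 - x) * K2) := by
    intro x hx
    have hvx : a x * u' x = -(∫ t in Ioc x 1, I.indicator Au t) := by
      have h1 := hve x hx
      have hadj : P x + ∫ t in x..(1:ℝ), I.indicator Au t = P 1 :=
        intervalIntegral.integral_add_adjacent_intervals
          (hgInt.intervalIntegrable) (hgInt.intervalIntegrable)
      rw [intervalIntegral.integral_of_le hx.2.le] at hadj
      rw [h1]
      linarith [hVt1]
    rw [hvx, abs_neg]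
    have hle1 : |∫ t in Ioc x 1, I.indicator Au t| ≤ ∫ t in Ioc x 1, |I.indicator Au t| := by
      have h := norm_integral_le_integral_norm (μ := volume.restrict (Ioc x 1))
        (f := I.indicator Au)
      simpa [Real.norm_eq_abs] using h
    have hfin2 : volume (Ioc x (1:ℝ)) ≠ ⊤ := measure_Ioc_lt_top.ne
    have hcs := my_cs measurableSet_Ioc hfin2 hgInt.integrableOn hg2Int.integrableOn
    have hm : (volume (Ioc x (1:ℝ))).toReal = 1 - x := by
      rw [Real.volume_Ioc, ENNReal.toReal_ofReal (by linarith [hx.2])]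
    have hle2 : ∫ t in Ioc x 1, (I.indicator Au t) ^ 2 ≤ K2 :=
      setIntegral_le_integral hg2Int (ae_of_all _ fun t => sq_nonneg _)
    calc |∫ t in Ioc x 1, I.indicator Au t|
        ≤ ∫ t in Ioc x 1, |I.indicator Au t| := hle1
      _ ≤ Real.sqrt ((volume (Ioc x (1:ℝ))).toReal *
            ∫ t in Ioc x 1, (I.indicator Au t) ^ 2) := hcs
      _ ≤ Real.sqrt ((1 - x) * K2) := by
          rw [hm]
          exact Real.sqrt_le_sqrt (mul_le_mul_of_nonneg_left hle2 (by linarith [hx.2]))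
  have hbd2 : ∀ x ∈ I, |a x * u' x| ≤ Real.sqrt ((1 + x) * K2) := by
    intro x hx
    have hvx : a x * u' x = ∫ t in Ioc (-1:ℝ) x, I.indicator Au t := by
      have h1 := hve x hx
      have hadj : P (-1) + ∫ t in (-1:ℝ)..x, I.indicator Au t = P x :=
        intervalIntegral.integral_add_adjacent_intervals
          (hgInt.intervalIntegrable) (hgInt.intervalIntegrable)
      rw [intervalIntegral.integral_of_le hx.1.le] at hadj
      rw [h1]
      linarith [hVtm1]
    rw [hvx]
    have hle1 : |∫ t in Ioc (-1:ℝ) x, I.indicator Au t|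
        ≤ ∫ t in Ioc (-1:ℝ) x, |I.indicator Au t| := by
      have h := norm_integral_le_integral_norm (μ := volume.restrict (Ioc (-1:ℝ) x))
        (f := I.indicator Au)
      simpa [Real.norm_eq_abs] using h
    have hfin2 : volume (Ioc (-1:ℝ) x) ≠ ⊤ := measure_Ioc_lt_top.ne
    have hcs := my_cs measurableSet_Ioc hfin2 hgInt.integrableOn hg2Int.integrableOn
    have hm : (volume (Ioc (-1:ℝ) x)).toReal = 1 + x := by
      rw [Real.volume_Ioc, ENNReal.toReal_ofReal (by linarith [hx.1])]
      ring
    have hle2 : ∫ t in Ioc (-1:ℝ) x, (I.indicator Au t) ^ 2 ≤ K2 :=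
      setIntegral_le_integral hg2Int (ae_of_all _ fun t => sq_nonneg _)
    calc |∫ t in Ioc (-1:ℝ) x, I.indicator Au t|
        ≤ ∫ t in Ioc (-1:ℝ) x, |I.indicator Au t| := hle1
      _ ≤ Real.sqrt ((volume (Ioc (-1:ℝ) x)).toReal *
            ∫ t in Ioc (-1:ℝ) x, (I.indicator Au t) ^ 2) := hcs
      _ ≤ Real.sqrt ((1 + x) * K2) := by
          rw [hm]
          exact Real.sqrt_le_sqrt (mul_le_mul_of_nonneg_left hle2 (by linarith [hx.1]))

  -- Step C : limit of (a u') * w at 1 is 0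
  have htw1 : Tendsto (fun x => a x * u' x * w x) (𝓝[<] (1:ℝ))
      (𝓝 (a 0 * u' 0 * w 0 + Q 1)) := by
    refine Filter.Tendsto.congr' ?_
      (((continuous_const.add hQc).tendsto 1).mono_left nhdsWithin_le_nhds)
    filter_upwards [hI1] with x hx using (hQe x hx).symm
  have htwm1 : Tendsto (fun x => a x * u' x * w x) (𝓝[>] (-1:ℝ))
      (𝓝 (a 0 * u' 0 * w 0 + Q (-1))) := by
    refine Filter.Tendsto.congr' ?_
      (((continuous_const.add hQc).tendsto (-1)).mono_left nhdsWithin_le_nhds)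
    filter_upwards [hIm1] with x hx using (hQe x hx).symm
  have hW1 : a 0 * u' 0 * w 0 + Q 1 = 0 := by
    by_contra hne
    set D := a 0 * u' 0 * w 0 + Q 1 with hD
    have hDpos : (0:ℝ) < |D| / 2 := half_pos (abs_pos.2 hne)
    have hev : ∀ᶠ x in 𝓝[<] (1:ℝ), |D| / 2 < |a x * u' x * w x| :=
      htw1.abs.eventually (eventually_gt_nhds (half_lt_self (abs_pos.2 hne)))
    have hmem : ∀ᶠ x in 𝓝[<] (1:ℝ), x ∈ I := hI1
    obtain ⟨l, hl, hsub⟩ := mem_nhdsLT_iff_exists_Ioo_subset.1 (hev.and hmem)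
    set y₀ := max l 0 with hy₀_def
    have hy₀1 : y₀ < 1 := max_lt hl (by norm_num)
    have hss : Ioo y₀ 1 ⊆ Ioo l 1 := Ioo_subset_Ioo_left (le_max_left _ _)
    have hsubI' : Ioo y₀ 1 ⊆ I := by
      intro z hz
      have h1 := le_max_right l 0
      exact ⟨by linarith [hz.1], hz.2⟩
    have hmid : (y₀ + 1) / 2 ∈ Ioo y₀ 1 := by constructor <;> linarith
    have hK2pos : 0 < K2 := by
      rcases hK2nn.lt_or_eq with h | h
      · exact h
      · exfalso
        obtain ⟨hgt, hxI⟩ := hsub (hss hmid)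
        have hb1 := hbd1 _ hxI
        rw [← h, mul_zero, Real.sqrt_zero] at hb1
        have hv0 : |a ((y₀ + 1) / 2) * u' ((y₀ + 1) / 2)| = 0 :=
          le_antisymm hb1 (abs_nonneg _)
        have hvw0 : |a ((y₀ + 1) / 2) * u' ((y₀ + 1) / 2) * w ((y₀ + 1) / 2)| = 0 := by
          rw [abs_mul, hv0, zero_mul]
        linarith [hgt, hvw0.le]
    have hb : IntegrableOn (fun x : ℝ => (1 - x)⁻¹) (Ioo y₀ 1) volume := by
      refine Integrable.mono' ((hw2.mono_set hsubI').const_mul (K2 / (D / 2) ^ 2))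
        ((measurable_const.sub measurable_id).inv.aestronglyMeasurable) ?_
      rw [ae_restrict_iff' measurableSet_Ioo]
      refine ae_of_all _ fun x hx => ?_
      have hxI : x ∈ I := hsubI' hx
      obtain ⟨hgt, -⟩ := hsub (hss hx)
      have h1x : (0:ℝ) < 1 - x := by linarith [hx.2]
      have hb1 := hbd1 x hxI
      set R := Real.sqrt ((1 - x) * K2) with hR_def
      have hRpos : 0 < R := Real.sqrt_pos.2 (mul_pos h1x hK2pos)
      have hR2 : R ^ 2 = (1 - x) * K2 := Real.sq_sqrt (mul_pos h1x hK2pos).le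
      have hchain : |D| / 2 < R * |w x| := by
        have h1 : |a x * u' x * w x| = |a x * u' x| * |w x| := abs_mul _ _
        have h2 : |a x * u' x| * |w x| ≤ R * |w x| :=
          mul_le_mul_of_nonneg_right hb1 (abs_nonneg _)
        linarith [hgt]
      have hw_lb : |D| / 2 / R < |w x| := by
        rw [div_lt_iff₀ hRpos]; linarith [hchain, mul_comm R (|w x|)]
      have hsq : (|D| / 2 / R) ^ 2 < w x ^ 2 := by
        have h3 : |D| / 2 / R * (|D| / 2 / R) < |w x| * |w x| :=
          mul_self_lt_mul_self (by positivity) hw_lb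
        have e2 : |w x| * |w x| = w x ^ 2 := by rw [← sq, sq_abs]
        rw [sq]
        linarith
      have hDabs : (|D| / 2) ^ 2 = (D / 2) ^ 2 := by
        rw [div_pow, div_pow, sq_abs]
      have hdivsq : (|D| / 2 / R) ^ 2 = (D / 2) ^ 2 / ((1 - x) * K2) := by
        rw [div_pow, hR2, hDabs]
      rw [Real.norm_eq_abs, abs_of_nonneg (inv_pos.2 h1x).le]
      have hD2pos : (0:ℝ) < (D / 2) ^ 2 := by
        rw [← hDabs]; positivity
      have he2 : (1 - x)⁻¹ = K2 / (D / 2) ^ 2 * ((D / 2) ^ 2 / ((1 - x) * K2)) := by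
        field_simp
      rw [he2]
      refine mul_le_mul_of_nonneg_left ?_ (by positivity)
      rw [← hdivsq]
      exact hsq.le
    exact aux_ni_right hy₀1 hb
  -- Step C' : limit of (a u') * w at -1 is 0
  have hWm1 : a 0 * u' 0 * w 0 + Q (-1) = 0 := by
    by_contra hne
    set D := a 0 * u' 0 * w 0 + Q (-1) with hD
    have hDpos : (0:ℝ) < |D| / 2 := half_pos (abs_pos.2 hne)
    have hev : ∀ᶠ x in 𝓝[>] (-1:ℝ), |D| / 2 < |a x * u' x * w x| :=
      htwm1.abs.eventually (eventually_gt_nhds (half_lt_self (abs_pos.2 hne)))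
    have hmem : ∀ᶠ x in 𝓝[>] (-1:ℝ), x ∈ I := hIm1
    obtain ⟨l, hl, hsub⟩ := mem_nhdsGT_iff_exists_Ioo_subset.1 (hev.and hmem)
    set y₀ := min l 0 with hy₀_def
    have hy₀1 : -1 < y₀ := lt_min hl (by norm_num)
    have hss : Ioo (-1:ℝ) y₀ ⊆ Ioo (-1:ℝ) l := Ioo_subset_Ioo_right (min_le_left _ _)
    have hsubI' : Ioo (-1:ℝ) y₀ ⊆ I := by
      intro z hz
      have h1 := min_le_right l 0
      exact ⟨hz.1, by linarith [hz.2]⟩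
    have hmid : (-1 + y₀) / 2 ∈ Ioo (-1:ℝ) y₀ := by constructor <;> linarith
    have hK2pos : 0 < K2 := by
      rcases hK2nn.lt_or_eq with h | h
      · exact h
      · exfalso
        obtain ⟨hgt, hxI⟩ := hsub (hss hmid)
        have hb1 := hbd2 _ hxI
        rw [← h, mul_zero, Real.sqrt_zero] at hb1
        have hv0 : |a ((-1 + y₀) / 2) * u' ((-1 + y₀) / 2)| = 0 :=
          le_antisymm hb1 (abs_nonneg _)
        have hvw0 : |a ((-1 + y₀) / 2) * u' ((-1 + y₀) / 2) * w ((-1 + y₀) / 2)| = 0 := by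
          rw [abs_mul, hv0, zero_mul]
        linarith [hgt, hvw0.le]
    have hb : IntegrableOn (fun x : ℝ => (1 + x)⁻¹) (Ioo (-1:ℝ) y₀) volume := by
      refine Integrable.mono' ((hw2.mono_set hsubI').const_mul (K2 / (D / 2) ^ 2))
        ((measurable_const.add measurable_id).inv.aestronglyMeasurable) ?_
      rw [ae_restrict_iff' measurableSet_Ioo]
      refine ae_of_all _ fun x hx => ?_
      have hxI : x ∈ I := hsubI' hx
      obtain ⟨hgt, -⟩ := hsub (hss hx)
      have h1x : (0:ℝ) < 1 + x := by linarith [hx.1]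
      have hb1 := hbd2 x hxI
      set R := Real.sqrt ((1 + x) * K2) with hR_def
      have hRpos : 0 < R := Real.sqrt_pos.2 (mul_pos h1x hK2pos)
      have hR2 : R ^ 2 = (1 + x) * K2 := Real.sq_sqrt (mul_pos h1x hK2pos).le
      have hchain : |D| / 2 < R * |w x| := by
        have h1 : |a x * u' x * w x| = |a x * u' x| * |w x| := abs_mul _ _
        have h2 : |a x * u' x| * |w x| ≤ R * |w x| :=
          mul_le_mul_of_nonneg_right hb1 (abs_nonneg _)
        linarith [hgt]
      have hw_lb : |D| / 2 / R < |w x| := by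
        rw [div_lt_iff₀ hRpos]; linarith [hchain, mul_comm R (|w x|)]
      have hsq : (|D| / 2 / R) ^ 2 < w x ^ 2 := by
        have h3 : |D| / 2 / R * (|D| / 2 / R) < |w x| * |w x| :=
          mul_self_lt_mul_self (by positivity) hw_lb
        have e2 : |w x| * |w x| = w x ^ 2 := by rw [← sq, sq_abs]
        rw [sq]
        linarith
      have hDabs : (|D| / 2) ^ 2 = (D / 2) ^ 2 := by
        rw [div_pow, div_pow, sq_abs]
      have hdivsq : (|D| / 2 / R) ^ 2 = (D / 2) ^ 2 / ((1 + x) * K2) := by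
        rw [div_pow, hR2, hDabs]
      rw [Real.norm_eq_abs, abs_of_nonneg (inv_pos.2 h1x).le]
      have hD2pos : (0:ℝ) < (D / 2) ^ 2 := by
        rw [← hDabs]; positivity
      have he2 : (1 + x)⁻¹ = K2 / (D / 2) ^ 2 * ((D / 2) ^ 2 / ((1 + x) * K2)) := by
        field_simp
      rw [he2]
      refine mul_le_mul_of_nonneg_left ?_ (by positivity)
      rw [← hdivsq]
      exact hsq.le
    exact aux_ni_left hy₀1 hb
  -- Step D : conclusion
  have hadj : (∫ t in (-1:ℝ)..0, q t) + ∫ t in (0:ℝ)..1, q t = ∫ t in (-1:ℝ)..1, q t :=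
    intervalIntegral.integral_add_adjacent_intervals
      hqInt.intervalIntegrable hqInt.intervalIntegrable
  have hsymm : (∫ t in (-1:ℝ)..0, q t) = -Q (-1) := by
    rw [show Q (-1) = ∫ t in (0:ℝ)..(-1:ℝ), q t from rfl,
      intervalIntegral.integral_symm]
  have htotal : (∫ t in (-1:ℝ)..1, q t) = 0 := by
    have e01 : (∫ t in (0:ℝ)..1, q t) = Q 1 := rfl
    rw [← hadj, hsymm, e01]
    linarith [hW1, hWm1]
  have hIoo0 : ∫ t in I, (Au t * w t + a t * u' t * w' t) = 0 := by
    have e1 : ∫ t in I, (Au t * w t + a t * u' t * w' t) = ∫ t in I, q t :=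
      setIntegral_congr_fun measurableSet_Ioo fun t ht =>
        (Set.indicator_of_mem ht (fun t => Au t * w t + a t * u' t * w' t)).symm
    have e2 : ∫ t in Ioc (-1:ℝ) 1, q t = ∫ t in I, q t := by
      rw [hI_def]
      exact integral_Ioc_eq_integral_Ioo
    have e3 : (∫ t in (-1:ℝ)..1, q t) = ∫ t in Ioc (-1:ℝ) 1, q t :=
      intervalIntegral.integral_of_le (by norm_num)
    rw [e1, ← e2, ← e3, htotal]
  rw [integral_add hAuw hauw] at hIoo0
  linarith [hIoo0]


/-- The degenerate diffusion operator A₀u = (a u_x)_x on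
    D(A₀) = {u ∈ H¹_a : a u_x ∈ H¹(-1,1), (a u_x)(±1) = 0} is symmetric and dissipative:
    ⟨A₀u,u⟩ = −∫ a u_x² ≤ 0 and ⟨A₀u,w⟩ = ⟨u,A₀w⟩. -/
theorem degenerate_operator_selfadjoint_dissipative
    (a : ℝ → ℝ) (ha : ContDiffOn ℝ 1 a (Icc (-1) 1))
    (hapos : ∀ x ∈ Ioo (-1:ℝ) 1, 0 < a x)
    (ha1 : a (-1) = 0) (ha2 : a 1 = 0)
    (hAint : IntegrableOn (fun x => ∫ s in (0:ℝ)..x, 1 / a s) (Ioo (-1) 1))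
    (u u' Au w w' Aw : ℝ → ℝ)
    -- u ∈ D(A₀)
    (hu : ∀ x ∈ Ioo (-1:ℝ) 1, HasDerivAt u (u' x) x)
    (huL2 : MemLp u 2 (volume.restrict (Ioo (-1) 1)))
    (huL2' : MemLp (fun x => Real.sqrt (a x) * u' x) 2 (volume.restrict (Ioo (-1) 1)))
    (hAu : ∀ x ∈ Ioo (-1:ℝ) 1, HasDerivAt (fun y => a y * u' y) (Au x) x)
    (hAuL2 : MemLp Au 2 (volume.restrict (Ioo (-1) 1)))
    (hubc : a 1 * u' 1 = 0 ∧ a (-1) * u' (-1) = 0)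
    -- w ∈ D(A₀)
    (hw : ∀ x ∈ Ioo (-1:ℝ) 1, HasDerivAt w (w' x) x)
    (hwL2 : MemLp w 2 (volume.restrict (Ioo (-1) 1)))
    (hwL2' : MemLp (fun x => Real.sqrt (a x) * w' x) 2 (volume.restrict (Ioo (-1) 1)))
    (hAw : ∀ x ∈ Ioo (-1:ℝ) 1, HasDerivAt (fun y => a y * w' y) (Aw x) x)
    (hAwL2 : MemLp Aw 2 (volume.restrict (Ioo (-1) 1)))
    (hwbc : a 1 * w' 1 = 0 ∧ a (-1) * w' (-1) = 0) :
    (∫ x in Ioo (-1:ℝ) 1, Au x * u x) = -(∫ x in Ioo (-1:ℝ) 1, a x * u' x ^ 2) ∧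
    (∫ x in Ioo (-1:ℝ) 1, Au x * u x) ≤ 0 ∧
    (∫ x in Ioo (-1:ℝ) 1, Au x * w x) = ∫ x in Ioo (-1:ℝ) 1, u x * Aw x := by
  have hca : ContinuousOn a (Ioo (-1:ℝ) 1) := ha.continuousOn.mono Ioo_subset_Icc_self
  have hu'c : ContinuousOn u' (Ioo (-1:ℝ) 1) := by
    have hcv : ContinuousOn (fun x => a x * u' x) (Ioo (-1:ℝ) 1) := fun x hx =>
      (hAu x hx).continuousAt.continuousWithinAt
    refine (hcv.div hca fun x hx => (hapos x hx).ne').congr fun x hx => ?_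
    exact (mul_div_cancel_left₀ _ (hapos x hx).ne').symm
  have hw'c : ContinuousOn w' (Ioo (-1:ℝ) 1) := by
    have hcv : ContinuousOn (fun x => a x * w' x) (Ioo (-1:ℝ) 1) := fun x hx =>
      (hAw x hx).continuousAt.continuousWithinAt
    refine (hcv.div hca fun x hx => (hapos x hx).ne').congr fun x hx => ?_
    exact (mul_div_cancel_left₀ _ (hapos x hx).ne').symm
  have h1 := ibp_key a ha hapos ha1 ha2 u' Au u u' huL2' hAu hAuL2 hu huL2 huL2' hu'c hu'c
  have h2 := ibp_key a ha hapos ha1 ha2 u' Au w w' huL2' hAu hAuL2 hw hwL2 hwL2' hu'c hw'c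
  have h3 := ibp_key a ha hapos ha1 ha2 w' Aw u u' hwL2' hAw hAwL2 hu huL2 huL2' hw'c hu'c
  have e1 : ∫ x in Ioo (-1:ℝ) 1, a x * u' x * u' x = ∫ x in Ioo (-1:ℝ) 1, a x * u' x ^ 2 :=
    setIntegral_congr_fun measurableSet_Ioo fun x _ => by ring
  have e2 : ∫ x in Ioo (-1:ℝ) 1, u x * Aw x = ∫ x in Ioo (-1:ℝ) 1, Aw x * u x :=
    setIntegral_congr_fun measurableSet_Ioo fun x _ => by ring
  have e3 : ∫ x in Ioo (-1:ℝ) 1, a x * u' x * w' x = ∫ x in Ioo (-1:ℝ) 1, a x * w' x * u' x :=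
    setIntegral_congr_fun measurableSet_Ioo fun x _ => by ring
  have hnn : 0 ≤ ∫ x in Ioo (-1:ℝ) 1, a x * u' x ^ 2 :=
    setIntegral_nonneg measurableSet_Ioo fun x hx =>
      mul_nonneg (hapos x hx).le (sq_nonneg _)
  refine ⟨by rw [h1, e1], ?_, ?_⟩
  · rw [h1, e1]; linarith
  · rw [h2, e2, h3, e3]
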